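/- In the free Zinbiel algebra A on one generator x over a field of characteristic 0 (with basis x, x^2, x^3, ..., powers defined by x^{i+1} = x x^i, and multiplication x^i x^j = binomial(i+j-1, j) x^{i+j}), for any positive integers λ_1,...,λ_n, the left-normed-from-the-right product X_{λ_1}(X_{λ_2}(⋯(X_{λ_{n-1}} X_{λ_n})⋯)) equals P_n(λ_1,...,λ_n) X_{λ_1+...+λ_n}, where X_i = i! x^i and P_n(λ_1,...,λ_n) = ∏_{m=1}^{n-1} λ_m/(λ_m + ... + λ_n). -/

import Mathlib

/-- Right-normed powers: `apow mul x (i-1)` represents `x^i`. -/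
def apow {A : Type*} (mul : A → A → A) (a : A) : ℕ → A
  | 0 => a
  | n + 1 => mul a (apow mul a n)

/-- `rnorm mul g i m` is the right-normed product `g i (g (i+1) (⋯ (g (i+m)) ⋯))`. -/
def rnorm {A : Type*} (mul : A → A → A) (g : ℕ → A) (i : ℕ) : ℕ → A
  | 0 => g i
  | m + 1 => mul (g i) (rnorm mul g (i + 1) m)

/-- `Pfun l n = ∏_{m=1}^{n-1} l m / (l m + ... + l n)`. -/
def Pfun (l : ℕ → ℚ) (n : ℕ) : ℚ :=
  ∏ m ∈ Finset.Ico 1 n, l m / (∑ t ∈ Finset.Icc m n, l t)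

lemma nat_key (a b : ℕ) (ha : 1 ≤ a) (hb : 1 ≤ b) :
    a.factorial * b.factorial * ((a+b-1).choose b) * (a+b) = a * (a+b).factorial := by
  obtain ⟨a', rfl⟩ : ∃ a', a = a' + 1 := ⟨a - 1, by omega⟩
  have h2 := Nat.choose_mul_factorial_mul_factorial (Nat.le_add_left b a')
  have e1 : a' + 1 + b - 1 = a' + b := by omega
  have e2 : a' + b - b = a' := by omega
  have e3 : a' + 1 + b = (a' + b) + 1 := by omega
  rw [e1, e3, Nat.factorial_succ (a' + b), ← h2, e2, Nat.factorial_succ a']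
  ring

theorem stmt5 (k A : Type*) [Field k] [CharZero k] [AddCommGroup A] [Module k A]
    (mul : A →ₗ[k] A →ₗ[k] A)
    (hz : ∀ x y z : A, mul (mul x y) z = mul x (mul z y) + mul x (mul y z))
    (x : A)
    (hfree : ∀ i j : ℕ, 1 ≤ i → 1 ≤ j →
      mul (apow (fun a b => mul a b) x (i - 1)) (apow (fun a b => mul a b) x (j - 1))
        = (((i + j - 1).choose j : k)) • apow (fun a b => mul a b) x (i + j - 1))
    (n : ℕ) (hn : 1 ≤ n) (l : ℕ → ℕ) (hl : ∀ i, 0 < l i) :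
    rnorm (fun a b => mul a b)
        (fun i => ((l i).factorial : k) • apow (fun a b => mul a b) x (l i - 1)) 1 (n - 1)
      = ((Pfun (fun i => (l i : ℚ)) n : ℚ) : k) •
          (((∑ t ∈ Finset.Icc 1 n, l t).factorial : k) •
            apow (fun a b => mul a b) x ((∑ t ∈ Finset.Icc 1 n, l t) - 1)) := by
  suffices H : ∀ m i : ℕ,
      rnorm (fun a b => mul a b)
        (fun j => ((l j).factorial : k) • apow (fun a b => mul a b) x (l j - 1)) i m
      = (((∏ j ∈ Finset.Ico i (i+m), (l j : ℚ) / (∑ t ∈ Finset.Icc j (i+m), (l t : ℚ))) : ℚ) : k) •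
        (((∑ t ∈ Finset.Icc i (i+m), l t).factorial : k) •
          apow (fun a b => mul a b) x ((∑ t ∈ Finset.Icc i (i+m), l t) - 1)) by
    have h := H (n-1) 1
    have h1 : 1 + (n-1) = n := by omega
    rw [h1] at h
    simpa only [Pfun] using h
  intro m
  induction m with
  | zero =>
    intro i
    simp [rnorm]
  | succ m ih =>
    intro i
    have hub : i + 1 + m = i + (m+1) := by omega
    have ih' := ih (i+1)
    rw [hub] at ih'
    set a := l i with ha
    set b := ∑ t ∈ Finset.Icc (i+1) (i+(m+1)), l t with hbdef
    set C := ∏ j ∈ Finset.Ico (i+1) (i+(m+1)), (l j : ℚ) / (∑ t ∈ Finset.Icc j (i+(m+1)), (l t : ℚ)) with hCdef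
    have hb : 1 ≤ b := by
      have hmem : i+1 ∈ Finset.Icc (i+1) (i+(m+1)) := by
        simp only [Finset.mem_Icc]
        omega
      have := Finset.single_le_sum (f := l) (fun t _ => Nat.zero_le _) hmem
      have := hl (i+1)
      omega
    have ha1 : 1 ≤ a := hl i
    -- split the sum and the product
    have hS : ∑ t ∈ Finset.Icc i (i+(m+1)), l t = a + b := by
      rw [← Finset.Ioc_insert_left (by omega : i ≤ i+(m+1)),
        Finset.sum_insert (by simp), ← Finset.Icc_add_one_left_eq_Ioc]
    have hSq : ∑ t ∈ Finset.Icc i (i+(m+1)), (l t : ℚ) = (a : ℚ) + (b : ℚ) := by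
      exact_mod_cast hS
    have hC : ∏ j ∈ Finset.Ico i (i+(m+1)), (l j : ℚ) / (∑ t ∈ Finset.Icc j (i+(m+1)), (l t : ℚ))
        = ((a : ℚ) / ((a : ℚ) + (b : ℚ))) * C := by
      rw [← Finset.Ioo_insert_left (by omega : i < i+(m+1)),
        Finset.prod_insert (by simp), ← Finset.Ico_add_one_left_eq_Ioo, hSq]
    -- unfold one step of rnorm
    show (mul ((a.factorial : k) • apow (fun a b => mul a b) x (a - 1)))
        (rnorm (fun a b => mul a b)
          (fun j => ((l j).factorial : k) • apow (fun a b => mul a b) x (l j - 1)) (i+1) m)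
      = _
    rw [ih', hS, hC]
    simp only [map_smul, LinearMap.smul_apply, LinearMap.map_smul]
    rw [hfree a b ha1 hb]
    simp only [smul_smul]
    congr 1
    have hqk : (a.factorial : k) * b.factorial * ((a+b-1).choose b) * ((a:k)+(b:k))
        = (a:k) * (a+b).factorial := by
      exact_mod_cast nat_key a b ha1 hb
    have hab : (a:k)+(b:k) ≠ 0 := by
      have h0 : ((a+b : ℕ) : k) ≠ 0 := Nat.cast_ne_zero.2 (by omega)
      push_cast at h0
      exact h0
    push_cast
    field_simp
    linear_combination ((C : k)) * hqk
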